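/- Let X be a zero-dimensional set of reals. Then X satisfies Ufin(O,Ω) if, and only if, for every continuous function Ψ : X → ℕ^ℕ and every natural number k, the image Ψ[X] is not k-dominating. -/

import Mathlib

open Filter

/-- `f ≤* g`: `f n ≤ g n` for all but finitely many `n`. -/
def EvLE (f g : ℕ → ℕ) : Prop := ∀ᶠ n in atTop, f n ≤ g n

/-- A subset of the Baire space is dominating if every function is
eventually dominated by a member of it. -/
def Dominating (Y : Set (ℕ → ℕ)) : Prop := ∀ g : ℕ → ℕ, ∃ f ∈ Y, EvLE g f

/-- A subset of the Baire space is bounded (w.r.t. `≤*`) if some single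
function eventually dominates all its members. -/
def BoundedStar (Y : Set (ℕ → ℕ)) : Prop := ∃ g : ℕ → ℕ, ∀ f ∈ Y, EvLE f g

/-- `maxfin Y`: pointwise maxima of nonempty finite subsets of `Y`. -/
def maxfin (Y : Set (ℕ → ℕ)) : Set (ℕ → ℕ) :=
  {g | ∃ F : Finset (ℕ → ℕ), F.Nonempty ∧ ↑F ⊆ Y ∧ g = fun n => F.sup (fun f => f n)}

/-- `Y` is `k`-dominating: for each `f` there are `g_1, …, g_k ∈ Y` whose
pointwise maximum eventually dominates `f`. -/
def KDominating (Y : Set (ℕ → ℕ)) (k : ℕ) : Prop :=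
  ∀ f : ℕ → ℕ, ∃ g : Fin k → (ℕ → ℕ), (∀ i, g i ∈ Y) ∧
    ∀ᶠ n in atTop, f n ≤ Finset.univ.sup (fun i => g i n)

/-- An open cover of a topological space. -/
def IsOpenCover {α : Type*} [TopologicalSpace α] (𝒰 : Set (Set α)) : Prop :=
  (∀ u ∈ 𝒰, IsOpen u) ∧ ⋃₀ 𝒰 = Set.univ

/-- An ω-cover: a cover such that every finite subset of the space is
contained in some member. -/
def IsOmegaCover {α : Type*} (𝒱 : Set (Set α)) : Prop :=
  ⋃₀ 𝒱 = Set.univ ∧ ∀ F : Set α, F.Finite → ∃ V ∈ 𝒱, F ⊆ V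

/-- A γ-cover: an infinite cover such that every point belongs to all but
finitely many members. -/
def IsGammaCover {α : Type*} (𝒱 : Set (Set α)) : Prop :=
  ⋃₀ 𝒱 = Set.univ ∧ 𝒱.Infinite ∧ ∀ x : α, {V ∈ 𝒱 | x ∉ V}.Finite

/-- A set of reals is zero-dimensional: its subspace topology has a base of
clopen sets. -/
def ZeroDimensionalSet (X : Set ℝ) : Prop :=
  ∃ B : Set (Set ↥X), TopologicalSpace.IsTopologicalBasis B ∧ ∀ b ∈ B, IsClopen b

/-- The Menger property `Ufin(O,O)`. -/
def MengerProp (α : Type*) [TopologicalSpace α] : Prop :=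
  ∀ 𝒰 : ℕ → Set (Set α), (∀ n, (𝒰 n).Countable ∧ IsOpenCover (𝒰 n)) →
    ∃ ℱ : ℕ → Set (Set α), (∀ n, (ℱ n).Finite ∧ ℱ n ⊆ 𝒰 n) ∧
      (⋃ n, ⋃₀ ℱ n) = Set.univ

/-- The Hurewicz property `Ufin(O,Γ)`. -/
def HurewiczProp (α : Type*) [TopologicalSpace α] : Prop :=
  ∀ 𝒰 : ℕ → Set (Set α), (∀ n, (𝒰 n).Countable ∧ IsOpenCover (𝒰 n)) →
    ∃ ℱ : ℕ → Set (Set α), (∀ n, (ℱ n).Finite ∧ ℱ n ⊆ 𝒰 n) ∧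
      ((∃ n, ⋃₀ ℱ n = Set.univ) ∨ IsGammaCover {s | ∃ n, s = ⋃₀ ℱ n})

/-- The property `Ufin(O,Ω)`. -/
def UfinOOmega (α : Type*) [TopologicalSpace α] : Prop :=
  ∀ 𝒰 : ℕ → Set (Set α), (∀ n, (𝒰 n).Countable ∧ IsOpenCover (𝒰 n)) →
    ∃ ℱ : ℕ → Set (Set α), (∀ n, (ℱ n).Finite ∧ ℱ n ⊆ 𝒰 n) ∧
      ((∃ n, ⋃₀ ℱ n = Set.univ) ∨ IsOmegaCover {s | ∃ n, s = ⋃₀ ℱ n})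

theorem kdom_zero_false {Y : Set (ℕ → ℕ)} (h : KDominating Y 0) : False := by
  obtain ⟨g, -, hev⟩ := h (fun _ => 1)
  have : Finset.univ (α := Fin 0) = ∅ := rfl
  simp only [this, Finset.sup_empty] at hev
  obtain ⟨n, hn⟩ := hev.exists
  simp at hn

theorem kdom_dominating_maxfin {Y : Set (ℕ → ℕ)} {k : ℕ} (h : KDominating Y k) :
    Dominating (maxfin Y) := by
  classical
  rcases k with _ | k
  · exact (kdom_zero_false h).elim
  intro g
  obtain ⟨t, ht, hev⟩ := h g
  refine ⟨fun n => (Finset.univ.image t).sup (fun f => f n),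
    ⟨Finset.univ.image t, (Finset.univ_nonempty).image t, ?_, rfl⟩, ?_⟩
  · intro φ hφ
    simp only [Finset.coe_image, Set.mem_image] at hφ
    obtain ⟨i, -, rfl⟩ := hφ
    exact ht i
  · refine hev.mono fun n hn => ?_
    calc g n ≤ Finset.univ.sup (fun i => t i n) := hn
    _ = (Finset.univ.image t).sup (fun f => f n) := by
        rw [Finset.sup_image]; rfl

theorem exists_kdom_of_dominating_maxfin {Y : Set (ℕ → ℕ)}
    (hD : Dominating (maxfin Y)) : ∃ k, KDominating Y k := by
  classical
  by_contra hk
  push_neg at hk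
  have hk' : ∀ k, ∃ f : ℕ → ℕ, ∀ g : Fin k → (ℕ → ℕ), (∀ i, g i ∈ Y) →
      ¬ ∀ᶠ n in atTop, f n ≤ Finset.univ.sup (fun i => g i n) := by
    intro k
    have := hk k
    unfold KDominating at this
    push_neg at this
    obtain ⟨f, hf⟩ := this
    exact ⟨f, fun g hg h => hf g hg (h.mono fun n hn => not_lt.mpr hn)⟩
  choose fk hfk using hk'
  obtain ⟨h, ⟨F, hFne, hFY, rfl⟩, hle⟩ := hD (fun n => (Finset.range (n+1)).sup (fun k => fk k n))
  set c := F.card with hc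
  set e := F.equivFin
  refine hfk c (fun i => (e.symm i : ℕ → ℕ)) (fun i => hFY (e.symm i).2) ?_
  have hsup : ∀ n, F.sup (fun f => f n) = Finset.univ.sup (fun i : Fin c => (e.symm i : ℕ → ℕ) n) := by
    intro n
    apply le_antisymm
    · refine Finset.sup_le fun φ hφ => ?_
      have : (e.symm (e ⟨φ, hφ⟩) : ℕ → ℕ) n = φ n := by rw [Equiv.symm_apply_apply]
      rw [← this]
      exact Finset.le_sup (f := fun i : Fin c => (e.symm i : ℕ → ℕ) n) (Finset.mem_univ _)
    · exact Finset.sup_le fun i _ => Finset.le_sup (f := fun f => f n) (e.symm i).2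
  have hev2 : ∀ᶠ n in atTop, n ≥ c := eventually_ge_atTop c
  refine (hle.and hev2).mono fun n ⟨hn, hnc⟩ => ?_
  rw [← hsup]
  calc fk c n ≤ (Finset.range (n+1)).sup (fun k => fk k n) :=
        Finset.le_sup (f := fun k => fk k n) (Finset.mem_range.mpr (Nat.lt_succ_of_le hnc))
    _ ≤ F.sup (fun f => f n) := hn

/-- In an ω-cover with no member equal to the whole space, every finite set
is contained in infinitely many members. -/
theorem omegaCover_infinitely_many {α : Type*} {𝒱 : Set (Set α)}
    (h : IsOmegaCover 𝒱) (hne : ∀ V ∈ 𝒱, V ≠ Set.univ)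
    {A : Set α} (hA : A.Finite) : {V ∈ 𝒱 | A ⊆ V}.Infinite := by
  classical
  cases isEmpty_or_nonempty α with
  | inl hemp =>
    intro _
    obtain ⟨V, hV, -⟩ := h.2 ∅ Set.finite_empty
    exact hne V hV (Subsingleton.elim V Set.univ)
  | inr hne' => ?_
  intro hfin
  set S := {V ∈ 𝒱 | A ⊆ V} with hS
  have hpick : ∀ V ∈ S, ∃ x, x ∉ V := fun V hV =>
    (Set.ne_univ_iff_exists_notMem V).mp (hne V hV.1)
  choose! p hp using hpick
  have hA' : (A ∪ p '' S).Finite := hA.union (hfin.image p)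
  obtain ⟨W, hW, hWsub⟩ := h.2 _ hA'
  have hWS : W ∈ S := ⟨hW, (Set.subset_union_left).trans hWsub⟩
  exact hp W hWS (hWsub (Or.inr (Set.mem_image_of_mem p hWS)))

theorem not_dominating_of_ufin {α : Type*} [TopologicalSpace α]
    (hU : UfinOOmega α) (Ψ : α → ℕ → ℕ) (hΨ : Continuous Ψ) :
    ¬ Dominating (maxfin (Set.range Ψ)) := by
  classical
  intro hD
  set B : Set ℕ := {n | ∃ m, ∀ x, Ψ x n ≤ m} with hBdef
  by_cases hBc : Bᶜ.Infinite
  · -- infinitely many unbounded coordinates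
    have hinf : {n | n ∈ Bᶜ}.Infinite := hBc
    set e : ℕ → ℕ := Nat.nth (· ∈ Bᶜ) with he
    have hemem : ∀ k, e k ∉ B := fun k => Nat.nth_mem_of_infinite hinf k
    have hemono : StrictMono e := Nat.nth_strictMono hinf
    set V : ℕ → ℕ → Set α := fun k m => {x | ∀ i ≤ k, Ψ x (e i) ≤ m} with hV
    have hVopen : ∀ k m, IsOpen (V k m) := by
      intro k m
      have : V k m = ⋂ i ∈ Finset.range (k+1), (fun x => Ψ x (e i)) ⁻¹' (Set.Iic m) := by
        ext x
        simp [hV, Nat.lt_succ_iff]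
      rw [this]
      exact isOpen_biInter_finset fun i _ =>
        ((continuous_apply (e i)).comp hΨ).isOpen_preimage _ (isOpen_discrete _)
    have hVmono : ∀ k {m m'}, m ≤ m' → V k m ⊆ V k m' := by
      intro k m m' hm x hx i hi
      exact (hx i hi).trans hm
    have hVne : ∀ k m, V k m ≠ Set.univ := by
      intro k m hVu
      refine hemem k ⟨m, fun x => ?_⟩
      have : x ∈ V k m := hVu ▸ Set.mem_univ x
      exact this k le_rfl
    have hcov : ∀ k, ⋃₀ Set.range (V k) = Set.univ := by
      intro k
      rw [Set.sUnion_range]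
      refine Set.eq_univ_iff_forall.mpr fun x => Set.mem_iUnion.mpr ?_
      exact ⟨(Finset.range (k+1)).sup (fun i => Ψ x (e i)), fun i hi =>
        Finset.le_sup (f := fun i => Ψ x (e i)) (Finset.mem_range.mpr (Nat.lt_succ_of_le hi))⟩
    obtain ⟨ℱ, hℱ, hdisj⟩ := hU (fun k => Set.range (V k))
      (fun k => ⟨Set.countable_range _, fun u hu => by
        obtain ⟨m, rfl⟩ := hu; exact hVopen k m, hcov k⟩)
    -- index bound for each selection
    set f : ℕ → ℕ := fun k =>
      ((hℱ k).1.toFinset).sup (fun s => if h : ∃ m, V k m = s then h.choose else 0) with hf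
    have hsub : ∀ k, ⋃₀ ℱ k ⊆ V k (f k) := by
      intro k x hx
      obtain ⟨s, hs, hxs⟩ := hx
      obtain ⟨m, rfl⟩ := (hℱ k).2 hs
      have hex : ∃ m', V k m' = V k m := ⟨m, rfl⟩
      have hle : hex.choose ≤ f k := by
        have := Finset.le_sup (s := (hℱ k).1.toFinset)
          (f := fun s => if h : ∃ m', V k m' = s then h.choose else 0)
          ((hℱ k).1.mem_toFinset.mpr hs)
        simpa only [dif_pos hex] using this
      have : x ∈ V k hex.choose := by rw [hex.choose_spec]; exact hxs
      exact hVmono k hle this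
    have hne' : ∀ k, ⋃₀ ℱ k ≠ Set.univ := by
      intro k hk
      exact hVne k (f k) (Set.eq_univ_of_univ_subset (hk ▸ hsub k))
    have hΩ : IsOmegaCover {s | ∃ k, s = ⋃₀ ℱ k} := by
      rcases hdisj with ⟨k, hk⟩ | hΩ
      · exact (hne' k hk).elim
      · exact hΩ
    -- build the function g witnessing non-domination
    set g : ℕ → ℕ := fun n => if h : ∃ k, e k = n then f h.choose + 1 else 0 with hg
    have hgek : ∀ k, g (e k) = f k + 1 := by
      intro k
      have hex : ∃ k', e k' = e k := ⟨k, rfl⟩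
      have : hex.choose = k := hemono.injective hex.choose_spec
      simp only [hg, dif_pos hex, this]
    obtain ⟨h, ⟨F, hFne, hFsub, rfl⟩, hle⟩ := hD g
    obtain ⟨N, hN⟩ := eventually_atTop.mp hle
    -- pull back F to finitely many points of α
    obtain ⟨φ₀, hφ₀⟩ := hFne
    obtain ⟨x₀, -⟩ := hFsub hφ₀
    set a : (ℕ → ℕ) → α := fun φ => if h : ∃ x, Ψ x = φ then h.choose else x₀ with ha
    have haΨ : ∀ φ ∈ F, Ψ (a φ) = φ := by
      intro φ hφ
      have hex : ∃ x, Ψ x = φ := hFsub hφ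
      simp only [ha, dif_pos hex]
      exact hex.choose_spec
    set A : Set α := a '' ↑F with hA
    have hAfin : A.Finite := F.finite_toSet.image a
    have hVinf := omegaCover_infinitely_many hΩ (by rintro W ⟨k, rfl⟩; exact hne' k) hAfin
    have hKinf : {k | A ⊆ ⋃₀ ℱ k}.Infinite := by
      intro hKfin
      refine hVinf (Set.Finite.subset (hKfin.image (fun k => ⋃₀ ℱ k)) ?_)
      rintro W ⟨⟨k, rfl⟩, hAW⟩
      exact ⟨k, hAW, rfl⟩
    obtain ⟨k, hkA, hkN⟩ : ∃ k, A ⊆ ⋃₀ ℱ k ∧ N ≤ k := by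
      by_contra hcon
      push_neg at hcon
      exact hKinf (Set.Finite.subset (Set.finite_Iio N) (fun k hk => hcon k hk))
    have hek : N ≤ e k := hkN.trans (hemono.le_apply)
    have h1 : g (e k) ≤ F.sup (fun φ => φ (e k)) := hN (e k) hek
    have h2 : F.sup (fun φ => φ (e k)) ≤ f k := by
      refine Finset.sup_le fun φ hφ => ?_
      have hxA : a φ ∈ A := Set.mem_image_of_mem a hφ
      have : a φ ∈ V k (f k) := hsub k (hkA hxA)
      have := this k le_rfl
      rwa [haΨ φ hφ] at this
    rw [hgek k] at h1
    exact Nat.not_succ_le_self _ (h1.trans h2)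
  · -- cofinitely many coordinates are bounded
    rw [Set.not_infinite] at hBc
    have hBev : ∀ᶠ n in atTop, n ∈ B := by
      rw [← Nat.cofinite_eq_atTop]
      exact Filter.eventually_cofinite.mpr hBc
    set g : ℕ → ℕ := fun n => if h : n ∈ B then h.choose + 1 else 0 with hg
    obtain ⟨h, ⟨F, hFne, hFsub, rfl⟩, hle⟩ := hD g
    obtain ⟨n, hgle, hnB⟩ := (hle.and hBev).exists
    have hbd : F.sup (fun φ => φ n) ≤ hnB.choose := by
      refine Finset.sup_le fun φ hφ => ?_
      obtain ⟨x, rfl⟩ := hFsub hφ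
      exact hnB.choose_spec x
    rw [hg] at hgle
    simp only [dif_pos hnB] at hgle
    exact Nat.not_succ_le_self _ (hgle.trans hbd)

theorem ufin_of_not_dominating (X : Set ℝ) (hX : ZeroDimensionalSet X)
    (H : ∀ Ψ : ↥X → (ℕ → ℕ), Continuous Ψ → ¬ Dominating (maxfin (Set.range Ψ))) :
    UfinOOmega ↥X := by
  classical
  intro 𝒰 h𝒰
  cases isEmpty_or_nonempty ↥X with
  | inl hemp =>
    refine ⟨fun _ => ∅, fun n => ⟨Set.finite_empty, Set.empty_subset _⟩, Or.inl ⟨0, ?_⟩⟩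
    rw [Set.sUnion_empty]
    exact (Set.univ_eq_empty_iff.mpr hemp).symm
  | inr hXne =>
  obtain ⟨B, hBbasis, hBclopen⟩ := hX
  -- refine each cover to a countable clopen cover
  have key : ∀ n, ∃ C : ℕ → Set ↥X, (∀ m, IsClopen (C m)) ∧
      (∀ m, ∃ u ∈ 𝒰 n, C m ⊆ u) ∧ (⋃ m, C m) = Set.univ := by
    intro n
    obtain ⟨hopen, hcover⟩ := (h𝒰 n).2
    set S : Set (Set ↥X) := {b ∈ B | ∃ u ∈ 𝒰 n, b ⊆ u} with hSdef
    have hSopen : ∀ s ∈ S, IsOpen s := fun s hs => (hBclopen s hs.1).2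
    have hScover : ⋃₀ S = Set.univ := by
      refine Set.eq_univ_iff_forall.mpr fun x => ?_
      have hx : x ∈ ⋃₀ 𝒰 n := hcover ▸ Set.mem_univ x
      obtain ⟨u, hu, hxu⟩ := hx
      obtain ⟨b, hb, hxb, hbu⟩ := hBbasis.exists_subset_of_mem_open hxu (hopen u hu)
      exact ⟨b, ⟨hb, u, hu, hbu⟩, hxb⟩
    obtain ⟨T, hTcount, hTS, hTeq⟩ := TopologicalSpace.isOpen_sUnion_countable S hSopen
    have hTuniv : ⋃₀ T = Set.univ := hTeq.trans hScover
    have hTne : T.Nonempty := by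
      obtain ⟨x⟩ := hXne
      have : x ∈ ⋃₀ T := hTuniv ▸ Set.mem_univ x
      obtain ⟨t, ht, -⟩ := this
      exact ⟨t, ht⟩
    obtain ⟨C, hC⟩ := hTcount.exists_eq_range hTne
    have hCS : ∀ m, C m ∈ S := fun m => hTS (hC ▸ Set.mem_range_self m)
    refine ⟨C, fun m => hBclopen _ (hCS m).1, fun m => (hCS m).2, ?_⟩
    rw [← Set.sUnion_range, ← hC, hTuniv]
  choose C hCclopen hCU hCcov using key
  choose u hu hCu using hCU
  have hex : ∀ (x : ↥X) (n : ℕ), ∃ m, x ∈ C n m := by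
    intro x n
    have : x ∈ ⋃ m, C n m := (hCcov n) ▸ Set.mem_univ x
    exact Set.mem_iUnion.mp this
  set Ψ : ↥X → ℕ → ℕ := fun x n => Nat.find (hex x n) with hΨdef
  have hΨmem : ∀ x n, x ∈ C n (Ψ x n) := fun x n => Nat.find_spec (hex x n)
  have hfiber : ∀ n m, {x : ↥X | Ψ x n = m} =
      C n m ∩ ⋂ j ∈ Finset.range m, (C n j)ᶜ := by
    intro n m
    ext x
    simp only [Set.mem_setOf_eq, Set.mem_inter_iff, Set.mem_iInter, Set.mem_compl_iff,
      Finset.mem_range]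
    constructor
    · rintro rfl
      exact ⟨hΨmem x n, fun j hj => Nat.find_min (hex x n) hj⟩
    · rintro ⟨hxm, hmin⟩
      have h1 : Ψ x n ≤ m := Nat.find_le hxm
      rcases lt_or_eq_of_le h1 with h | h
      · exact absurd (hΨmem x n) (hmin _ h)
      · exact h
  have hΨcont : Continuous Ψ := by
    refine continuous_pi fun n => ?_
    refine IsLocallyConstant.continuous ?_
    rw [IsLocallyConstant.iff_isOpen_fiber]
    intro m
    have : (fun x => Ψ x n) ⁻¹' {m} = {x : ↥X | Ψ x n = m} := rfl
    rw [this, hfiber n m]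
    exact ((hCclopen n m).2).inter (isOpen_biInter_finset fun j _ => (hCclopen n j).1.isOpen_compl)
  obtain ⟨g, hg⟩ : ∃ g : ℕ → ℕ, ∀ h ∈ maxfin (Set.range Ψ), ¬ EvLE g h := by
    have := H Ψ hΨcont
    unfold Dominating at this
    push_neg at this
    obtain ⟨g, hg⟩ := this
    exact ⟨g, fun h hh => hg h hh⟩
  set ℱ : ℕ → Set (Set ↥X) := fun n => u n '' Set.Iio (g n) with hℱdef
  have hℱfin : ∀ n, (ℱ n).Finite := fun n => (Set.finite_Iio _).image _
  have hℱsub : ∀ n, ℱ n ⊆ 𝒰 n := by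
    rintro n s ⟨m, -, rfl⟩
    exact hu n m
  have key2 : ∀ (F : Set ↥X), F.Finite → F.Nonempty → ∃ n, F ⊆ ⋃₀ ℱ n := by
    intro F hFfin hFne
    set Fim : Finset (ℕ → ℕ) := hFfin.toFinset.image Ψ with hFim
    have hFimne : Fim.Nonempty :=
      (hFfin.toFinset_nonempty.mpr hFne).image Ψ
    have hFimsub : ↑Fim ⊆ Set.range Ψ := by
      rintro φ hφ
      simp only [hFim, Finset.coe_image, Set.mem_image] at hφ
      obtain ⟨x, -, rfl⟩ := hφ
      exact Set.mem_range_self x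
    have hmf : (fun n => Fim.sup (fun f => f n)) ∈ maxfin (Set.range Ψ) :=
      ⟨Fim, hFimne, hFimsub, rfl⟩
    have := hg _ hmf
    unfold EvLE at this
    rw [not_eventually] at this
    obtain ⟨n, hn⟩ := this.exists
    push_neg at hn
    refine ⟨n, fun x hx => ?_⟩
    have hΨle : Ψ x n ≤ Fim.sup (fun f => f n) := by
      exact Finset.le_sup (f := fun f : ℕ → ℕ => f n)
        (Finset.mem_image_of_mem Ψ (hFfin.mem_toFinset.mpr hx))
    have hΨlt : Ψ x n < g n := lt_of_le_of_lt hΨle hn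
    exact ⟨u n (Ψ x n), ⟨Ψ x n, hΨlt, rfl⟩, hCu n (Ψ x n) (hΨmem x n)⟩
  refine ⟨ℱ, fun n => ⟨hℱfin n, hℱsub n⟩, Or.inr ⟨?_, ?_⟩⟩
  · refine Set.eq_univ_iff_forall.mpr fun x => ?_
    obtain ⟨n, hn⟩ := key2 {x} (Set.finite_singleton x) ⟨x, rfl⟩
    exact ⟨⋃₀ ℱ n, ⟨n, rfl⟩, hn rfl⟩
  · intro F hFfin
    rcases F.eq_empty_or_nonempty with rfl | hFne
    · exact ⟨⋃₀ ℱ 0, ⟨0, rfl⟩, Set.empty_subset _⟩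
    · obtain ⟨n, hn⟩ := key2 F hFfin hFne
      exact ⟨⋃₀ ℱ n, ⟨n, rfl⟩, hn⟩

/-- A zero-dimensional set of reals satisfies `Ufin(O,Ω)` iff no continuous
image of it in the Baire space is `k`-dominating for any `k`. -/
theorem ufinOOmega_iff_no_kDominating_image (X : Set ℝ)
    (hX : ZeroDimensionalSet X) :
    UfinOOmega ↥X ↔
      ∀ Ψ : ↥X → (ℕ → ℕ), Continuous Ψ →
        ∀ k : ℕ, ¬ KDominating (Set.range Ψ) k := by
  constructor
  · intro hU Ψ hΨ k hKD
    exact not_dominating_of_ufin hU Ψ hΨ (kdom_dominating_maxfin hKD)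
  · intro H
    refine ufin_of_not_dominating X hX fun Ψ hΨ hD => ?_
    obtain ⟨k, hk⟩ := exists_kdom_of_dominating_maxfin hD
    exact H Ψ hΨ k hk
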